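/- Consider the semidefinite program for Alice's cheating in the stochastic switch between XOR oblivious transfer and three-outcome die rolling: maximize (1/2)·⟨σ^{OT}, P_accept⟩ + (1/2)·(1/3)·Σ_{y∈{0,1,2}} ⟨φ_y|σ_y^{DR}|φ_y⟩ over density matrices σ^{OT} on (ℂ²)^{⊗4}, σ_B on ℂ³, and σ₀^{DR}, σ₁^{DR}, σ₂^{DR} on ℂ³ ⊗ ℂ³, subject to: Tr_{G₀,G₁}(σ^{OT}) = Tr_B(U₂(|ψ⟩⟨ψ| ⊗ σ_B)U₂†) and Tr_A(σ_y^{DR}) = σ_B for all y ∈ {0,1,2}, where |ψ⟩ = (1/2)Σ_{x₀,x₁}|x₀x₁⟩, U₂ = Σ_{x₀,x₁}|x₀x₁⟩⟨x₀x₁| ⊗ diag((−1)^{x₀},(−1)^{x₁},1), and P_accept = Σ_{x₀,x₁}|x₀x₁⟩⟨x₀x₁| ⊗ |x₀x₁⟩⟨x₀x₁|. Its optimal value equals 17/24 = (1/2)·(3/4) + (1/2)·(2/3), attained at σ_B = (1/3)·1_{ℂ³}; that is, the stochastic switch gives no improvement over the individual optimal cheating probabilities 3/4 and 2/3, since both are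 achieved simultaneously by the same first message. -/

import Mathlib

/-! STATEMENT 17: Alice's optimal cheating probability in the stochastic switch between XOR oblivious transfer and three-outcome die rolling equals 17/24 = (1/2)(3/4) + (1/2)(2/3), attained at σ_B = (1/3)·1; the switch gives no improvement. -/

open Matrix
open scoped Matrix BigOperators ComplexOrder

noncomputable section

/-- Square matrices over ℂ indexed by `α`. -/
abbrev Mat (α : Type) : Type := Matrix α α ℂ

/-- A density matrix: positive semidefinite with unit trace. -/
def IsDensity {α : Type} [Fintype α] [DecidableEq α] (ρ : Mat α) : Prop :=
  ρ.PosSemidef ∧ ρ.trace = 1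

/-- Hilbert–Schmidt inner product ⟨P, Q⟩ = Tr(P† Q). -/
def hs {α : Type} [Fintype α] (P Q : Mat α) : ℂ := (Pᴴ * Q).trace

/-- Outer product |v⟩⟨v|. -/
def outer {α : Type} (v : α → ℂ) : Mat α := fun i j => v i * star (v j)

/-- Standard basis vector |i⟩. -/
def ket {α : Type} [DecidableEq α] (i : α) : α → ℂ := fun j => if j = i then 1 else 0

/-- The embedding of Fin 2 into Fin 3. -/
def f23 (y : Fin 2) : Fin 3 := ⟨y.val, by omega⟩

/-- |φ_y⟩ = (|yy⟩ + |22⟩)/√2 ∈ ℂ³ ⊗ ℂ³. -/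
def phi (y : Fin 2) : Fin 3 × Fin 3 → ℂ :=
  fun p => (ket (f23 y, f23 y) p + ket ((2 : Fin 3), (2 : Fin 3)) p) / (Real.sqrt 2 : ℂ)

/-- Partial trace over the first tensor factor. -/
def ptrA {α β : Type} [Fintype α] (ρ : Mat (α × β)) : Mat β :=
  fun b b' => ∑ a, ρ (a, b) (a, b')

/-- |ψ⟩ = (1/2) Σ_{x₀,x₁} |x₀x₁⟩ ∈ X₀ ⊗ X₁. -/
def psiX : Fin 2 × Fin 2 → ℂ := fun _ => 1/2

/-- U_{x₀x₁} = diag((−1)^{x₀}, (−1)^{x₁}, 1) as a diagonal entry function. -/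
def Udiag (x0 x1 : Fin 2) (b : Fin 3) : ℂ :=
  if b = 0 then (-1) ^ (x0 : ℕ) else if b = 1 then (-1) ^ (x1 : ℕ) else 1

/-- U₂ = Σ_{x₀,x₁} |x₀x₁⟩⟨x₀x₁| ⊗ U_{x₀x₁}, acting on X₀ ⊗ X₁ ⊗ B. -/
def U2 : Mat (Fin 2 × Fin 2 × Fin 3) :=
  Matrix.diagonal fun p => Udiag p.1 p.2.1 p.2.2

/-- The state |ψ⟩⟨ψ| ⊗ σ_B on X₀ ⊗ X₁ ⊗ B. -/
def inState (σB : Mat (Fin 3)) : Mat (Fin 2 × Fin 2 × Fin 3) :=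
  fun p q => outer psiX (p.1, p.2.1) (q.1, q.2.1) * σB p.2.2 q.2.2

/-- Partial trace over B, the last factor of X₀ ⊗ X₁ ⊗ B. -/
def trB (ρ : Mat (Fin 2 × Fin 2 × Fin 3)) : Mat (Fin 2 × Fin 2) :=
  fun p q => ∑ b, ρ (p.1, p.2, b) (q.1, q.2, b)

/-- Partial trace over G₀ and G₁, the last two factors of X₀ ⊗ X₁ ⊗ G₀ ⊗ G₁. -/
def trG01 (σ : Mat (Fin 2 × Fin 2 × Fin 2 × Fin 2)) : Mat (Fin 2 × Fin 2) :=
  fun p q => ∑ g0, ∑ g1, σ (p.1, p.2, g0, g1) (q.1, q.2, g0, g1)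

/-- P_accept = Σ_{x₀,x₁} |x₀x₁⟩⟨x₀x₁|_{X₀⊗X₁} ⊗ |x₀x₁⟩⟨x₀x₁|_{G₀⊗G₁}. -/
def Pacc : Mat (Fin 2 × Fin 2 × Fin 2 × Fin 2) := fun p q =>
  match p, q with
  | (x0, x1, g0, g1), (x0', x1', g0', g1') =>
    ∑ u0 : Fin 2, ∑ u1 : Fin 2,
      ket (u0, u1) (x0, x1) * star (ket (u0, u1) (x0', x1')) *
      (ket (u0, u1) (g0, g1) * star (ket (u0, u1) (g0', g1')))

/-- The constraint Tr_{G₀,G₁}(σ) = Tr_B(U₂(|ψ⟩⟨ψ| ⊗ σ_B)U₂†). -/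
def OTconstraint (σ : Mat (Fin 2 × Fin 2 × Fin 2 × Fin 2)) (σB : Mat (Fin 3)) : Prop :=
  trG01 σ = trB (U2 * inState σB * U2ᴴ)

/-- |φ₀⟩ = (|00⟩+|22⟩)/√2, |φ₁⟩ = (|11⟩+|22⟩)/√2, |φ₂⟩ = (|00⟩+|11⟩)/√2. -/
def phiD (y : Fin 3) : Fin 3 × Fin 3 → ℂ := fun p =>
  if y = 0 then (ket ((0 : Fin 3), (0 : Fin 3)) p + ket ((2 : Fin 3), (2 : Fin 3)) p) / (Real.sqrt 2 : ℂ)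
  else if y = 1 then (ket ((1 : Fin 3), (1 : Fin 3)) p + ket ((2 : Fin 3), (2 : Fin 3)) p) / (Real.sqrt 2 : ℂ)
  else (ket ((0 : Fin 3), (0 : Fin 3)) p + ket ((1 : Fin 3), (1 : Fin 3)) p) / (Real.sqrt 2 : ℂ)

section
open Complex
-- scalar helpers
lemma three_sq (x y z : ℝ) : (x+y+z)^2 ≤ 3*(x^2+y^2+z^2) := by
  nlinarith [sq_nonneg (x-y), sq_nonneg (x-z), sq_nonneg (y-z)]

lemma normSq_add3_le (a b c : ℂ) :
    Complex.normSq (a+b+c) ≤ 3*(Complex.normSq a + Complex.normSq b + Complex.normSq c) := by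
  simp only [Complex.normSq_apply, Complex.add_re, Complex.add_im]
  nlinarith [three_sq a.re b.re c.re, three_sq a.im b.im c.im]

lemma key4 (a b c d : ℂ) (h : a - b - c + d = 0) :
    4 * Complex.normSq a ≤ 3*(Complex.normSq a + Complex.normSq b + Complex.normSq c + Complex.normSq d) := by
  have ha : a = b + c + (-d) := by linear_combination h
  have := normSq_add3_le b c (-d)
  rw [← ha] at this
  simp only [Complex.normSq_neg] at this
  linarith

lemma two_sq (a b : ℂ) : Complex.normSq (a+b) ≤ 2*(Complex.normSq a + Complex.normSq b) := by
  simp only [Complex.normSq_apply, Complex.add_re, Complex.add_im]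
  nlinarith [sq_nonneg (a.re - b.re), sq_nonneg (a.im - b.im)]

-- outer products
lemma outer_posSemidef {α : Type} [Fintype α] [DecidableEq α] (v : α → ℂ) : (outer v).PosSemidef := by
  refine Matrix.PosSemidef.of_dotProduct_mulVec_nonneg ?_ ?_
  · ext i j
    simp [outer, Matrix.conjTranspose_apply, mul_comm]
  · intro x
    have h1 : (outer v *ᵥ x) = fun i => v i * (∑ j, star (v j) * x j) := by
      funext i
      simp [outer, Matrix.mulVec, dotProduct, Finset.mul_sum, mul_assoc]
    rw [h1]
    have h2 : dotProduct (star x) (fun i => v i * (∑ j, star (v j) * x j))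
        = star (∑ j, star (v j) * x j) * (∑ j, star (v j) * x j) := by
      have hstar : star (∑ j, star (v j) * x j) = ∑ j, star (x j) * v j := by
        rw [star_sum]; exact Finset.sum_congr rfl fun j _ => by simp [mul_comm]
      rw [hstar, dotProduct, Finset.sum_mul]
      exact Finset.sum_congr rfl fun i _ => by simp [Pi.star_apply]; ring
    rw [h2]
    exact star_mul_self_nonneg _

lemma hs_expand {α : Type} [Fintype α] (M N : Mat α) :
    hs M N = ∑ p, ∑ q, star (M q p) * N q p := by
  simp [hs, Matrix.trace, Matrix.mul_apply, Matrix.conjTranspose_apply, Matrix.diag]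

end

lemma hs_Pacc (M : Mat (Fin 2 × Fin 2 × Fin 2 × Fin 2)) :
    hs M Pacc = ∑ g0 : Fin 2, ∑ g1 : Fin 2, star (M (g0,g1,g0,g1) (g0,g1,g0,g1)) := by
  rw [hs_expand]
  simp [Pacc, ket, Fintype.sum_prod_type, Fin.sum_univ_two, Prod.ext_iff]

lemma dot_self_eq_normSq {α : Type} [Fintype α] (y : α → ℂ) :
    dotProduct (star y) y = ((∑ i, Complex.normSq (y i) : ℝ) : ℂ) := by
  simp only [dotProduct, Pi.star_apply]
  push_cast
  exact Finset.sum_congr rfl fun i _ => (Complex.normSq_eq_conj_mul_self).symm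

lemma quadform_eq {α β : Type} [Fintype α] [Fintype β] (B : Matrix α β ℂ) (x : β → ℂ) :
    dotProduct (star x) ((Bᴴ * B) *ᵥ x) = ((∑ i, Complex.normSq ((B *ᵥ x) i) : ℝ) : ℂ) := by
  rw [← Matrix.mulVec_mulVec, Matrix.dotProduct_mulVec, ← Matrix.star_mulVec,
    dot_self_eq_normSq]

lemma outer_trace {α : Type} [Fintype α] (v : α → ℂ) :
    (outer v).trace = ((∑ i, Complex.normSq (v i) : ℝ) : ℂ) := by
  simp only [Matrix.trace, Matrix.diag, outer]
  push_cast
  exact Finset.sum_congr rfl fun i _ => by rw [Complex.star_def, Complex.mul_conj]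

def cOT (p : Fin 2 × Fin 2 × Fin 2 × Fin 2) : ℝ :=
  (if p.1 = p.2.2.1 then 1 else -1) + (if p.2.1 = p.2.2.2 then 1 else -1) + 1

def vOT (p : Fin 2 × Fin 2 × Fin 2 × Fin 2) : ℂ := ((cOT p * Real.sqrt 3 / 12 : ℝ) : ℂ)

def wDR (p : Fin 3 × Fin 3) : ℂ := ((if p.1 = p.2 then Real.sqrt 3 / 3 else 0 : ℝ) : ℂ)

lemma sqrt3_sq : Real.sqrt 3 ^ 2 = 3 := Real.sq_sqrt (by norm_num)
lemma sqrt2_sq : Real.sqrt 2 ^ 2 = 2 := Real.sq_sqrt (by norm_num)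

lemma vOT_trace : (outer vOT).trace = 1 := by
  rw [outer_trace, Complex.ofReal_eq_one]
  simp only [vOT, cOT, Fintype.sum_prod_type, Fin.sum_univ_two, Complex.normSq_ofReal]
  norm_num
  ring_nf
  norm_num [sqrt3_sq]

lemma wDR_trace : (outer wDR).trace = 1 := by
  rw [outer_trace, Complex.ofReal_eq_one]
  simp only [wDR, Fintype.sum_prod_type, Fin.sum_univ_three, Complex.normSq_ofReal]
  norm_num [Fin.ext_iff]
  ring_nf
  norm_num [sqrt3_sq]

set_option maxHeartbeats 2000000 in
lemma witness_OTcon : OTconstraint (outer vOT) ((1/3 : ℂ) • (1 : Mat (Fin 3))) := by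
  unfold OTconstraint
  ext ⟨a, b⟩ ⟨c, d⟩
  fin_cases a <;> fin_cases b <;> fin_cases c <;> fin_cases d <;>
  · simp only [trG01, trB, U2, inState, psiX, outer, Udiag, vOT, cOT,
      Matrix.diagonal_conjTranspose, Matrix.diagonal_mul, Matrix.mul_diagonal,
      Matrix.smul_apply, Matrix.one_apply, Fin.sum_univ_two, Fin.sum_univ_three, Pi.star_apply]
    norm_num [Fin.ext_iff]
    push_cast
    ring_nf
    norm_num [← Complex.ofReal_pow, sqrt3_sq]

set_option maxHeartbeats 1000000 in
lemma witness_ptrA : ptrA (outer wDR) = ((1/3 : ℂ) • (1 : Mat (Fin 3))) := by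
  ext b b'
  fin_cases b <;> fin_cases b' <;>
  · simp only [ptrA, outer, wDR, Fin.sum_univ_three, Matrix.smul_apply, Matrix.one_apply]
    norm_num [Fin.ext_iff]
    all_goals (push_cast; ring_nf; norm_num [← Complex.ofReal_pow, sqrt3_sq])

lemma witness_hsOT : hs (outer vOT) Pacc = 3/4 := by
  rw [hs_Pacc]
  simp only [outer, vOT, cOT, Fin.sum_univ_two]
  norm_num [Fin.ext_iff]
  all_goals (push_cast; ring_nf; norm_num [← Complex.ofReal_pow, sqrt3_sq])

lemma witness_hsDR (y : Fin 3) : hs (outer (phiD y)) (outer wDR) = 2/3 := by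
  rw [hs_expand]
  fin_cases y <;>
  · simp only [outer, phiD, ket, wDR, Fintype.sum_prod_type, Fin.sum_univ_three]
    norm_num [Fin.ext_iff, Prod.ext_iff]
    all_goals (push_cast; ring_nf; norm_num [← Complex.ofReal_pow, sqrt3_sq, sqrt2_sq, Complex.ext_iff])

lemma sigmaB_density : IsDensity ((1/3 : ℂ) • (1 : Mat (Fin 3))) := by
  constructor
  · have h : ((1/3 : ℂ) • (1 : Mat (Fin 3))) = Matrix.diagonal (fun _ => (1/3 : ℂ)) := by
      rw [Matrix.smul_one_eq_diagonal]
    rw [h]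
    refine Matrix.PosSemidef.diagonal fun i => ?_
    show (0:ℂ) ≤ ((1:ℂ)/3)
    rw [show ((1:ℂ)/3) = ((1/3 : ℝ) : ℂ) by norm_num, Complex.zero_le_real]
    norm_num
  · simp [Matrix.trace_smul, Matrix.trace_one]

lemma witness_exists :
    ∃ (σOT : Mat (Fin 2 × Fin 2 × Fin 2 × Fin 2)) (σB : Mat (Fin 3))
        (σ0 σ1 σ2 : Mat (Fin 3 × Fin 3)),
        IsDensity σOT ∧ IsDensity σB ∧
        IsDensity σ0 ∧ IsDensity σ1 ∧ IsDensity σ2 ∧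
        OTconstraint σOT σB ∧
        ptrA σ0 = σB ∧ ptrA σ1 = σB ∧ ptrA σ2 = σB ∧
        σB = (1/3 : ℂ) • (1 : Mat (Fin 3)) ∧
        ((1/2 : ℂ) * hs σOT Pacc
          + (1/2 : ℂ) * (1/3 : ℂ) * (hs (outer (phiD 0)) σ0
            + hs (outer (phiD 1)) σ1 + hs (outer (phiD 2)) σ2)).re = 17/24 := by
  refine ⟨outer vOT, (1/3 : ℂ) • 1, outer wDR, outer wDR, outer wDR,
    ⟨outer_posSemidef _, vOT_trace⟩, sigmaB_density,
    ⟨outer_posSemidef _, wDR_trace⟩, ⟨outer_posSemidef _, wDR_trace⟩,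
    ⟨outer_posSemidef _, wDR_trace⟩, witness_OTcon,
    witness_ptrA, witness_ptrA, witness_ptrA, rfl, ?_⟩
  rw [witness_hsOT, witness_hsDR 0, witness_hsDR 1, witness_hsDR 2]
  have : (1/2 : ℂ) * (3/4) + (1/2 : ℂ) * (1/3 : ℂ) * (2/3 + 2/3 + 2/3) = ((17/24 : ℝ) : ℂ) := by
    norm_num
  rw [this, Complex.ofReal_re]

lemma hs_outer {α : Type} [Fintype α] (φ : α → ℂ) (σ : Mat α) :
    hs (outer φ) σ = dotProduct (star φ) (σ *ᵥ φ) := by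
  rw [hs_expand]
  simp only [outer, dotProduct, Matrix.mulVec, Pi.star_apply, Finset.mul_sum]
  rw [Finset.sum_comm]
  refine Finset.sum_congr rfl fun q _ => Finset.sum_congr rfl fun p _ => ?_
  simp only [star_mul', star_star]
  ring

lemma diag_entry {α β : Type} [Fintype α] (B : Matrix α β ℂ) (p : β) :
    (Bᴴ * B) p p = ((∑ i, Complex.normSq (B i p) : ℝ) : ℂ) := by
  simp only [Matrix.mul_apply, Matrix.conjTranspose_apply]
  push_cast
  exact Finset.sum_congr rfl fun i _ => (Complex.normSq_eq_conj_mul_self).symm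

lemma DR_bound (σy : Mat (Fin 3 × Fin 3)) (σB : Mat (Fin 3)) (hy : σy.PosSemidef)
    (hp : ptrA σy = σB) (b1 b2 : Fin 3) :
    (hs (outer (fun p => (ket (b1,b1) p + ket (b2,b2) p) / (Real.sqrt 2 : ℂ))) σy).re
      ≤ (σB b1 b1).re + (σB b2 b2).re := by
  obtain ⟨B, rfl⟩ : ∃ B : Mat (Fin 3 × Fin 3), σy = Bᴴ * B := by
    open scoped MatrixOrder in
    exact CStarAlgebra.nonneg_iff_eq_star_mul_self.mp (Matrix.nonneg_iff_posSemidef.mpr hy)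
  rw [hs_outer, quadform_eq]
  have hv : ∀ i, ((B *ᵥ fun p => (ket (b1,b1) p + ket (b2,b2) p) / (Real.sqrt 2 : ℂ)) i)
      = (B i (b1,b1) + B i (b2,b2)) * ((Real.sqrt 2 : ℂ))⁻¹ := by
    intro i
    simp only [Matrix.mulVec, dotProduct, ket, div_eq_mul_inv, add_mul, ite_mul, one_mul,
      zero_mul, mul_add, Finset.sum_add_distrib, mul_ite, mul_zero, mul_one]
    rw [Finset.sum_ite_eq' Finset.univ (b1,b1) (fun p => B i p * (Real.sqrt 2 : ℂ)⁻¹),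
      Finset.sum_ite_eq' Finset.univ (b2,b2) (fun p => B i p * (Real.sqrt 2 : ℂ)⁻¹)]
    simp [add_mul]
  have hb : ∀ b : Fin 3, (σB b b).re = ∑ a, ∑ i, Complex.normSq (B i (a, b)) := by
    intro b
    rw [← hp]
    have : ptrA (Bᴴ * B) b b = ∑ a, (Bᴴ * B) (a,b) (a,b) := rfl
    rw [this]
    rw [show (∑ a, (Bᴴ * B) (a,b) (a,b)) = ((∑ a, ∑ i, Complex.normSq (B i (a,b)) : ℝ) : ℂ) by
      rw [Complex.ofReal_sum]; exact Finset.sum_congr rfl fun a _ => diag_entry B (a,b)]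
    rw [Complex.ofReal_re]
  rw [Complex.ofReal_re, hb b1, hb b2]
  have hle : ∀ i, Complex.normSq ((B *ᵥ fun p => (ket (b1,b1) p + ket (b2,b2) p) / (Real.sqrt 2 : ℂ)) i)
      ≤ Complex.normSq (B i (b1,b1)) + Complex.normSq (B i (b2,b2)) := by
    intro i
    rw [hv i, Complex.normSq_mul, Complex.normSq_inv]
    rw [show Complex.normSq ((Real.sqrt 2 : ℝ) : ℂ) = 2 by
      rw [Complex.normSq_ofReal, Real.mul_self_sqrt (by norm_num : (0:ℝ) ≤ 2)]]
    have := two_sq (B i (b1,b1)) (B i (b2,b2))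
    nlinarith [Complex.normSq_nonneg (B i (b1,b1) + B i (b2,b2))]
  calc ∑ i, Complex.normSq ((B *ᵥ fun p => (ket (b1,b1) p + ket (b2,b2) p) / (Real.sqrt 2 : ℂ)) i)
      ≤ ∑ i, (Complex.normSq (B i (b1,b1)) + Complex.normSq (B i (b2,b2))) :=
        Finset.sum_le_sum fun i _ => hle i
    _ = ∑ i, Complex.normSq (B i (b1,b1)) + ∑ i, Complex.normSq (B i (b2,b2)) :=
        Finset.sum_add_distrib
    _ ≤ (∑ a, ∑ i, Complex.normSq (B i (a, b1))) + ∑ a, ∑ i, Complex.normSq (B i (a, b2)) := by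
        gcongr <;>
        exact Finset.single_le_sum (f := fun a => ∑ i, Complex.normSq (B i (a, _)))
          (fun a _ => Finset.sum_nonneg fun i _ => Complex.normSq_nonneg _) (Finset.mem_univ _)

def chiv (g0 g1 : Fin 2) : (Fin 2 × Fin 2 × Fin 2 × Fin 2) → ℂ :=
  fun p => if p.2.2 = (g0, g1) then (if p.1 = p.2.1 then 1 else -1) else 0

set_option maxHeartbeats 8000000 in
lemma OT_bound (σOT : Mat (Fin 2 × Fin 2 × Fin 2 × Fin 2)) (σB : Mat (Fin 3))
    (hd : IsDensity σOT) (hcon : OTconstraint σOT σB) : (hs σOT Pacc).re ≤ 3/4 := by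
  obtain ⟨hpsd, htr1⟩ := hd
  obtain ⟨A, rfl⟩ : ∃ A : Mat (Fin 2 × Fin 2 × Fin 2 × Fin 2), σOT = Aᴴ * A := by
    open scoped MatrixOrder in
    exact CStarAlgebra.nonneg_iff_eq_star_mul_self.mp (Matrix.nonneg_iff_posSemidef.mpr hpsd)
  unfold OTconstraint at hcon
  -- sum of quadratic forms vanishes
  have hsum0 : ∑ g : Fin 2 × Fin 2,
      dotProduct (star (chiv g.1 g.2)) ((Aᴴ*A) *ᵥ chiv g.1 g.2) = 0 := by
    have e1 : ∑ g : Fin 2 × Fin 2,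
        dotProduct (star (chiv g.1 g.2)) ((Aᴴ*A) *ᵥ chiv g.1 g.2)
        = ∑ x0 : Fin 2, ∑ x1 : Fin 2, ∑ y0 : Fin 2, ∑ y1 : Fin 2,
          ((if x0 = x1 then (1:ℂ) else -1) * (if y0 = y1 then (1:ℂ) else -1))
            * trG01 (Aᴴ*A) (x0,x1) (y0,y1) := by
      simp only [dotProduct, Matrix.mulVec, chiv, trG01, Pi.star_apply,
        Fintype.sum_prod_type, Fin.sum_univ_two]
      norm_num [Prod.ext_iff, Fin.ext_iff]
      ring
    rw [e1, hcon]
    simp only [trB, U2, inState, psiX, outer, Udiag, Matrix.diagonal_conjTranspose,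
      Matrix.diagonal_mul, Matrix.mul_diagonal, Fin.sum_univ_two, Fin.sum_univ_three, Pi.star_apply]
    norm_num [Fin.ext_iff]
    ring
  have hg0 : ∀ g ∈ (Finset.univ : Finset (Fin 2 × Fin 2)), (0:ℂ) ≤
      dotProduct (star (chiv g.1 g.2)) ((Aᴴ*A) *ᵥ chiv g.1 g.2) :=
    fun g _ => (Matrix.posSemidef_conjTranspose_mul_self A).dotProduct_mulVec_nonneg (chiv g.1 g.2)
  have hgz : ∀ g : Fin 2 × Fin 2,
      dotProduct (star (chiv g.1 g.2)) ((Aᴴ*A) *ᵥ chiv g.1 g.2) = 0 :=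
    fun g => (Finset.sum_eq_zero_iff_of_nonneg hg0).mp hsum0 g (Finset.mem_univ g)
  have hz : ∀ g0 g1 i, (A *ᵥ chiv g0 g1) i = 0 := by
    intro g0 g1 i
    have h := hgz (g0, g1)
    rw [quadform_eq, Complex.ofReal_eq_zero] at h
    have := (Finset.sum_eq_zero_iff_of_nonneg
      (fun j _ => Complex.normSq_nonneg ((A *ᵥ chiv g0 g1) j))).mp h i (Finset.mem_univ i)
    exact Complex.normSq_eq_zero.mp this
  have hrel : ∀ g0 g1 i, A i (0,0,g0,g1) - A i (0,1,g0,g1) - A i (1,0,g0,g1)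
      + A i (1,1,g0,g1) = 0 := by
    intro g0 g1 i
    have h := hz g0 g1 i
    fin_cases g0 <;> fin_cases g1 <;>
    · simp only [Matrix.mulVec, dotProduct, chiv, Fintype.sum_prod_type,
        Fin.sum_univ_two] at h
      norm_num [Prod.ext_iff, Fin.ext_iff] at h
      simp only [Fin.mk_zero, Fin.mk_one]
      linear_combination h
  -- express hs
  have hhs : hs (Aᴴ*A) Pacc
      = ((∑ g0 : Fin 2, ∑ g1 : Fin 2, ∑ i, Complex.normSq (A i (g0,g1,g0,g1)) : ℝ) : ℂ) := by
    rw [hs_Pacc]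
    rw [Complex.ofReal_sum]
    refine Finset.sum_congr rfl fun g0 _ => ?_
    rw [Complex.ofReal_sum]
    refine Finset.sum_congr rfl fun g1 _ => ?_
    rw [diag_entry, Complex.star_def, Complex.conj_ofReal]
  rw [hhs, Complex.ofReal_re]
  -- trace gives total sum = 1
  have htr : (∑ p : Fin 2 × Fin 2 × Fin 2 × Fin 2, ∑ i, Complex.normSq (A i p)) = 1 := by
    have : (Aᴴ*A).trace = ((∑ p : Fin 2 × Fin 2 × Fin 2 × Fin 2, ∑ i,
        Complex.normSq (A i p) : ℝ) : ℂ) := by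
      rw [Matrix.trace, Complex.ofReal_sum]
      exact Finset.sum_congr rfl fun p _ => diag_entry A p
    rw [this, Complex.ofReal_eq_one] at htr1
    exact htr1
  have hg00 : 4 * (∑ i, Complex.normSq (A i (0,0,0,0)))
      ≤ 3 * (∑ i, (Complex.normSq (A i (0,0,0,0)) + Complex.normSq (A i (0,1,0,0))
        + Complex.normSq (A i (1,0,0,0)) + Complex.normSq (A i (1,1,0,0)))) := by
    rw [Finset.mul_sum, Finset.mul_sum]
    refine Finset.sum_le_sum fun i _ => ?_
    have := key4 _ _ _ _ (hrel 0 0 i); linarith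
  have hg01 : 4 * (∑ i, Complex.normSq (A i (0,1,0,1)))
      ≤ 3 * (∑ i, (Complex.normSq (A i (0,0,0,1)) + Complex.normSq (A i (0,1,0,1))
        + Complex.normSq (A i (1,0,0,1)) + Complex.normSq (A i (1,1,0,1)))) := by
    rw [Finset.mul_sum, Finset.mul_sum]
    refine Finset.sum_le_sum fun i _ => ?_
    have := key4 (A i (0,1,0,1)) (A i (0,0,0,1)) (A i (1,1,0,1)) (A i (1,0,0,1))
      (by linear_combination -(hrel 0 1 i)); linarith
  have hg10 : 4 * (∑ i, Complex.normSq (A i (1,0,1,0)))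
      ≤ 3 * (∑ i, (Complex.normSq (A i (0,0,1,0)) + Complex.normSq (A i (0,1,1,0))
        + Complex.normSq (A i (1,0,1,0)) + Complex.normSq (A i (1,1,1,0)))) := by
    rw [Finset.mul_sum, Finset.mul_sum]
    refine Finset.sum_le_sum fun i _ => ?_
    have := key4 (A i (1,0,1,0)) (A i (0,0,1,0)) (A i (1,1,1,0)) (A i (0,1,1,0))
      (by linear_combination -(hrel 1 0 i)); linarith
  have hg11 : 4 * (∑ i, Complex.normSq (A i (1,1,1,1)))
      ≤ 3 * (∑ i, (Complex.normSq (A i (0,0,1,1)) + Complex.normSq (A i (0,1,1,1))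
        + Complex.normSq (A i (1,0,1,1)) + Complex.normSq (A i (1,1,1,1)))) := by
    rw [Finset.mul_sum, Finset.mul_sum]
    refine Finset.sum_le_sum fun i _ => ?_
    have := key4 (A i (1,1,1,1)) (A i (0,1,1,1)) (A i (1,0,1,1)) (A i (0,0,1,1))
      (by linear_combination hrel 1 1 i); linarith
  have hexp : (∑ p : Fin 2 × Fin 2 × Fin 2 × Fin 2, ∑ i, Complex.normSq (A i p))
      = ∑ g0 : Fin 2, ∑ g1 : Fin 2, ∑ i, (Complex.normSq (A i (0,0,g0,g1))
        + Complex.normSq (A i (0,1,g0,g1)) + Complex.normSq (A i (1,0,g0,g1))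
        + Complex.normSq (A i (1,1,g0,g1))) := by
    simp only [Fintype.sum_prod_type, Fin.sum_univ_two, Finset.sum_add_distrib]
    ring
  rw [hexp] at htr
  simp only [Fin.sum_univ_two] at htr ⊢
  linarith [hg00, hg01, hg10, hg11]


theorem xot_dr_switch_cheating_Alice :
    IsGreatest
      {x : ℝ | ∃ (σOT : Mat (Fin 2 × Fin 2 × Fin 2 × Fin 2)) (σB : Mat (Fin 3))
          (σ0 σ1 σ2 : Mat (Fin 3 × Fin 3)),
        IsDensity σOT ∧ IsDensity σB ∧
        IsDensity σ0 ∧ IsDensity σ1 ∧ IsDensity σ2 ∧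
        OTconstraint σOT σB ∧
        ptrA σ0 = σB ∧ ptrA σ1 = σB ∧ ptrA σ2 = σB ∧
        x = ((1/2 : ℂ) * hs σOT Pacc
            + (1/2 : ℂ) * (1/3 : ℂ) * (hs (outer (phiD 0)) σ0
              + hs (outer (phiD 1)) σ1 + hs (outer (phiD 2)) σ2)).re}
      (17/24)
    ∧ (17/24 : ℝ) = (1/2) * (3/4) + (1/2) * (2/3)
    ∧ ∃ (σOT : Mat (Fin 2 × Fin 2 × Fin 2 × Fin 2)) (σB : Mat (Fin 3))
        (σ0 σ1 σ2 : Mat (Fin 3 × Fin 3)),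
        IsDensity σOT ∧ IsDensity σB ∧
        IsDensity σ0 ∧ IsDensity σ1 ∧ IsDensity σ2 ∧
        OTconstraint σOT σB ∧
        ptrA σ0 = σB ∧ ptrA σ1 = σB ∧ ptrA σ2 = σB ∧
        σB = (1/3 : ℂ) • (1 : Mat (Fin 3)) ∧
        ((1/2 : ℂ) * hs σOT Pacc
          + (1/2 : ℂ) * (1/3 : ℂ) * (hs (outer (phiD 0)) σ0
            + hs (outer (phiD 1)) σ1 + hs (outer (phiD 2)) σ2)).re = 17/24 := by
  refine ⟨⟨?_, ?_⟩, by norm_num, witness_exists⟩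
  · obtain ⟨σOT, σB, σ0, σ1, σ2, h1, h2, h3, h4, h5, h6, h7, h8, h9, _, hval⟩ :=
      witness_exists
    exact ⟨σOT, σB, σ0, σ1, σ2, h1, h2, h3, h4, h5, h6, h7, h8, h9, hval.symm⟩
  · rintro x ⟨σOT, σB, σ0, σ1, σ2, hdOT, hdB, hd0, hd1, hd2, hcon, hp0, hp1, hp2, rfl⟩
    have hOT := OT_bound σOT σB hdOT hcon
    have e0 : phiD 0 = fun p => (ket ((0:Fin 3),(0:Fin 3)) p + ket ((2:Fin 3),(2:Fin 3)) p)
        / (Real.sqrt 2 : ℂ) := by funext p; simp [phiD]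
    have e1 : phiD 1 = fun p => (ket ((1:Fin 3),(1:Fin 3)) p + ket ((2:Fin 3),(2:Fin 3)) p)
        / (Real.sqrt 2 : ℂ) := by funext p; simp [phiD]
    have e2 : phiD 2 = fun p => (ket ((0:Fin 3),(0:Fin 3)) p + ket ((1:Fin 3),(1:Fin 3)) p)
        / (Real.sqrt 2 : ℂ) := by funext p; simp [phiD]
    have h0 := DR_bound σ0 σB hd0.1 hp0 0 2
    have h1 := DR_bound σ1 σB hd1.1 hp1 1 2
    have h2 := DR_bound σ2 σB hd2.1 hp2 0 1
    rw [← e0] at h0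
    rw [← e1] at h1
    rw [← e2] at h2
    have htrB : (σB 0 0).re + (σB 1 1).re + (σB 2 2).re = 1 := by
      have := hdB.2
      rw [Matrix.trace] at this
      simp only [Matrix.diag, Fin.sum_univ_three] at this
      have := congrArg Complex.re this
      simpa [Complex.add_re] using this
    have hre : ((1/2 : ℂ) * hs σOT Pacc
        + (1/2 : ℂ) * (1/3 : ℂ) * (hs (outer (phiD 0)) σ0
          + hs (outer (phiD 1)) σ1 + hs (outer (phiD 2)) σ2)).re
        = (1/2) * (hs σOT Pacc).re + (1/6) * ((hs (outer (phiD 0)) σ0).re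
          + (hs (outer (phiD 1)) σ1).re + (hs (outer (phiD 2)) σ2).re) := by
      simp [Complex.add_re, Complex.mul_re, Complex.add_im]
      try norm_num
      try ring
    rw [hre]
    linarith

end
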